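/- Let A ∈ ℝ^{m×n}, U ∈ ℝ^{m×r}, V ∈ ℝ^{n×r} with rank(A) = rank(A + U Vᵀ) = n, and let b ∈ ℝ^m. With X = [V, AᵀU], Y = [(A + U Vᵀ)ᵀ U, V], Z = (AᵀA)⁻¹ X, Z₁ the first r columns of Z, w = A† b + Z₁ Uᵀ b, and x = w − Z (I_{2r} + Yᵀ Z)⁻¹ Yᵀ w, the vector x equals (A + U Vᵀ)† b, i.e., x is the unique minimizer of ‖b − (A + U Vᵀ) x‖₂. -/

import Mathlib

open Matrix

/-- `B` is the Moore–Penrose pseudoinverse of `A`. -/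
def IsMoorePenrose {m n : ℕ} (A : Matrix (Fin m) (Fin n) ℝ)
    (B : Matrix (Fin n) (Fin m) ℝ) : Prop :=
  A * B * A = A ∧ B * A * B = B ∧ (A * B)ᵀ = A * B ∧ (B * A)ᵀ = B * A

/-- The Euclidean (ℓ²) norm of a vector in `Fin k → ℝ`. -/
noncomputable def euclNorm {k : ℕ} (v : Fin k → ℝ) : ℝ :=
  ‖(WithLp.equiv 2 (Fin k → ℝ)).symm v‖

theorem mp_unique {m n : ℕ} {A : Matrix (Fin m) (Fin n) ℝ}
    {B C : Matrix (Fin n) (Fin m) ℝ}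
    (hB : IsMoorePenrose A B) (hC : IsMoorePenrose A C) : B = C := by
  obtain ⟨hB1, hB2, hB3, hB4⟩ := hB
  obtain ⟨hC1, hC2, hC3, hC4⟩ := hC
  have hAB : A * B = A * C := by
    have e1 : A * B = (A * C) * (A * B) := by
      conv_lhs => rw [← hC1]
      simp only [Matrix.mul_assoc]
    have e2 : (A * C) * (A * B) = ((A * B) * (A * C))ᵀ := by
      rw [transpose_mul, hC3, hB3]
    have e3 : (A * B) * (A * C) = A * C := by
      rw [← Matrix.mul_assoc, hB1]
    rw [e1, e2, e3, hC3]
  have hBA : B * A = C * A := by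
    have e1 : B * A = (B * A) * (C * A) := by
      conv_lhs => rw [← hC1]
      simp only [Matrix.mul_assoc]
    have e2 : (B * A) * (C * A) = ((C * A) * (B * A))ᵀ := by
      rw [transpose_mul, hB4, hC4]
    have e3 : (C * A) * (B * A) = C * A := by
      have h : (C * A) * (B * A) = C * ((A * B) * A) := by
        simp only [Matrix.mul_assoc]
      rw [h, hB1]
    rw [e1, e2, e3, hC4]
  calc B = (B * A) * B := hB2.symm
  _ = (C * A) * B := by rw [hBA]
  _ = C * (A * C) := by rw [Matrix.mul_assoc, hAB]
  _ = C := by rw [← Matrix.mul_assoc, hC2]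

theorem full_rank_unit {m n : ℕ} {A : Matrix (Fin m) (Fin n) ℝ}
    (hA : A.rank = n) : IsUnit (Aᵀ * A).det := by
  have h : (Aᵀ * A).rank = Fintype.card (Fin n) := by
    rw [Matrix.rank_transpose_mul_self, hA, Fintype.card_fin]
  rw [← Matrix.isUnit_iff_isUnit_det, ← Matrix.mulVec_injective_iff_isUnit]
  have hsurj : Function.Surjective (Aᵀ * A).mulVecLin := by
    rw [← LinearMap.range_eq_top]
    apply Submodule.eq_top_of_finrank_eq
    rw [← Matrix.rank, h, Fintype.card_fin]
    simp [Module.finrank_pi]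
  exact (LinearMap.injective_iff_surjective (f := (Aᵀ * A).mulVecLin)).mpr hsurj

theorem mp_pinv {m n : ℕ} {A : Matrix (Fin m) (Fin n) ℝ}
    (hA : A.rank = n) : IsMoorePenrose A ((Aᵀ * A)⁻¹ * Aᵀ) := by
  have hu := full_rank_unit hA
  have hinv : (Aᵀ * A)⁻¹ * (Aᵀ * A) = 1 := nonsing_inv_mul _ hu
  have hCA : ((Aᵀ * A)⁻¹ * Aᵀ) * A = 1 := by rw [Matrix.mul_assoc]; exact hinv
  refine ⟨?_, ?_, ?_, ?_⟩
  · rw [Matrix.mul_assoc, hCA, Matrix.mul_one]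
  · rw [hCA, Matrix.one_mul]
  · have h1 : (A * ((Aᵀ * A)⁻¹ * Aᵀ))ᵀ = A * ((Aᵀ * A)⁻¹)ᵀ * Aᵀ := by
      simp [transpose_mul, Matrix.mul_assoc]
    rw [h1, transpose_nonsing_inv]
    have h2 : (Aᵀ * A)ᵀ = Aᵀ * A := by simp [transpose_mul]
    rw [h2, Matrix.mul_assoc]
  · rw [hCA]; simp

theorem euclNorm_eq {k : ℕ} (v : Fin k → ℝ) : euclNorm v = Real.sqrt (v ⬝ᵥ v) := by
  rw [euclNorm, EuclideanSpace.norm_eq]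
  congr 1
  simp [dotProduct, sq]

theorem dp_self_nonneg {k : ℕ} (v : Fin k → ℝ) : 0 ≤ v ⬝ᵥ v :=
  Finset.sum_nonneg fun i _ => mul_self_nonneg (v i)



/-- Least squares: if `Âᵀ(b - Âx) = 0` and `ÂᵀÂ` invertible, x is the unique minimizer. -/
theorem ls_min {m n : ℕ} (Ah : Matrix (Fin m) (Fin n) ℝ) (b : Fin m → ℝ) (x : Fin n → ℝ)
    (hdet : IsUnit (Ahᵀ * Ah).det)
    (horth : Ahᵀ *ᵥ (b - Ah *ᵥ x) = 0) :
    (∀ y : Fin n → ℝ, euclNorm (b - Ah *ᵥ x) ≤ euclNorm (b - Ah *ᵥ y)) ∧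
      ∀ y : Fin n → ℝ, euclNorm (b - Ah *ᵥ y) = euclNorm (b - Ah *ᵥ x) → y = x := by
  have key : ∀ y : Fin n → ℝ, (b - Ah *ᵥ y) ⬝ᵥ (b - Ah *ᵥ y)
      = (b - Ah *ᵥ x) ⬝ᵥ (b - Ah *ᵥ x) + (Ah *ᵥ (x - y)) ⬝ᵥ (Ah *ᵥ (x - y)) := by
    intro y
    have hdec : b - Ah *ᵥ y = (b - Ah *ᵥ x) + Ah *ᵥ (x - y) := by
      rw [Matrix.mulVec_sub]; abel
    have hcross : (b - Ah *ᵥ x) ⬝ᵥ (Ah *ᵥ (x - y)) = 0 := by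
      rw [Matrix.dotProduct_mulVec, ← Matrix.mulVec_transpose, horth, zero_dotProduct]
    have hcross' : (Ah *ᵥ (x - y)) ⬝ᵥ (b - Ah *ᵥ x) = 0 := by
      rw [dotProduct_comm]; exact hcross
    rw [hdec, add_dotProduct, dotProduct_add, dotProduct_add, hcross, hcross']
    ring
  constructor
  · intro y
    rw [euclNorm_eq, euclNorm_eq]
    apply Real.sqrt_le_sqrt
    rw [key y]
    exact le_add_of_nonneg_right (dp_self_nonneg _)
  · intro y hy
    rw [euclNorm_eq, euclNorm_eq] at hy
    have h0 : (b - Ah *ᵥ y) ⬝ᵥ (b - Ah *ᵥ y) = (b - Ah *ᵥ x) ⬝ᵥ (b - Ah *ᵥ x) :=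
      (Real.sqrt_inj (dp_self_nonneg _) (dp_self_nonneg _)).mp hy
    have h1 : (Ah *ᵥ (x - y)) ⬝ᵥ (Ah *ᵥ (x - y)) = 0 := by
      have := key y; rw [h0] at this; linarith
    have h2 : Ah *ᵥ (x - y) = 0 := dotProduct_self_eq_zero.mp h1
    have h3 : (Ahᵀ * Ah) *ᵥ (x - y) = 0 := by
      rw [← Matrix.mulVec_mulVec, h2, Matrix.mulVec_zero]
    have h4 : x - y = 0 := by
      have hinj := Matrix.mulVec_injective_iff_isUnit.mpr (((Matrix.isUnit_iff_isUnit_det _).mpr hdet))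
      have := hinj (by rw [h3, Matrix.mulVec_zero] : (Ahᵀ * Ah) *ᵥ (x - y) = (Ahᵀ * Ah) *ᵥ 0)
      exact this
    exact (sub_eq_zero.mp h4).symm

/-- Correctness of Algorithm WoodburyLS. -/
theorem woodburyLS_correct {m n r : ℕ}
    (A : Matrix (Fin m) (Fin n) ℝ) (U : Matrix (Fin m) (Fin r) ℝ)
    (V : Matrix (Fin n) (Fin r) ℝ)
    (hA : A.rank = n) (hAhat : (A + U * Vᵀ).rank = n)
    (b : Fin m → ℝ)
    (Ad : Matrix (Fin n) (Fin m) ℝ) (hAd : IsMoorePenrose A Ad)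
    (Bd : Matrix (Fin n) (Fin m) ℝ) (hBd : IsMoorePenrose (A + U * Vᵀ) Bd)
    (X Y Z : Matrix (Fin n) (Fin r ⊕ Fin r) ℝ)
    (hX : X = fromCols V (Aᵀ * U))
    (hY : Y = fromCols ((A + U * Vᵀ)ᵀ * U) V)
    (hZ : Z = (Aᵀ * A)⁻¹ * X)
    (Z₁ : Matrix (Fin n) (Fin r) ℝ) (hZ₁ : Z₁ = Z.submatrix id Sum.inl)
    (w x : Fin n → ℝ)
    (hw : w = Ad *ᵥ b + Z₁ *ᵥ (Uᵀ *ᵥ b))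
    (hx : x = w - (Z * ((1 : Matrix (Fin r ⊕ Fin r) (Fin r ⊕ Fin r) ℝ) + Yᵀ * Z)⁻¹ * Yᵀ) *ᵥ w) :
    x = Bd *ᵥ b ∧
      (∀ y : Fin n → ℝ,
        euclNorm (b - (A + U * Vᵀ) *ᵥ x) ≤ euclNorm (b - (A + U * Vᵀ) *ᵥ y)) ∧
      ∀ y : Fin n → ℝ,
        euclNorm (b - (A + U * Vᵀ) *ᵥ y) = euclNorm (b - (A + U * Vᵀ) *ᵥ x) → y = x := by
  set Ah := A + U * Vᵀ with hAh_def
  set M := Aᵀ * A with hM_def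
  set N := Ahᵀ * Ah with hN_def
  have hM : IsUnit M.det := full_rank_unit hA
  have hN : IsUnit N.det := full_rank_unit hAhat
  have hAd' : Ad = M⁻¹ * Aᵀ := mp_unique hAd (mp_pinv hA)
  have hBd' : Bd = N⁻¹ * Ahᵀ := mp_unique hBd (mp_pinv hAhat)
  have hAhT : Ahᵀ = Aᵀ + V * Uᵀ := by
    rw [hAh_def, transpose_add, transpose_mul, transpose_transpose]
  -- N = M + X * Yᵀ
  have hXY : X * Yᵀ = V * (Uᵀ * Ah) + (Aᵀ * U) * Vᵀ := by
    rw [hX, hY, transpose_fromCols, fromCols_mul_fromRows]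
    simp only [transpose_mul, transpose_transpose, Matrix.mul_assoc]
  have hN_eq : N = M + X * Yᵀ := by
    rw [hXY, hN_def, hAhT, hAh_def, hM_def]
    simp only [Matrix.add_mul, Matrix.mul_add, Matrix.mul_assoc]
    abel
  -- Z₁ = M⁻¹ * V
  have hZ₁' : Z₁ = M⁻¹ * V := by
    rw [hZ₁, hZ, hX, mul_fromCols]
    ext i j
    simp [fromCols]
  -- w = (M⁻¹ * Ahᵀ) *ᵥ b
  have hw' : w = (M⁻¹ * Ahᵀ) *ᵥ b := by
    rw [hw, hAd', hZ₁', Matrix.mulVec_mulVec, hAhT, Matrix.mul_add, Matrix.add_mulVec,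
      ← Matrix.mul_assoc]
  -- invertibility of S = 1 + Yᵀ * Z
  set S := (1 : Matrix (Fin r ⊕ Fin r) (Fin r ⊕ Fin r) ℝ) + Yᵀ * Z with hS_def
  have hZYN : (1 : Matrix (Fin n) (Fin n) ℝ) + Z * Yᵀ = M⁻¹ * N := by
    rw [hN_eq, Matrix.mul_add, nonsing_inv_mul _ hM, hZ, Matrix.mul_assoc]
  have hSdet : IsUnit S.det := by
    have h1 : S.det = ((1 : Matrix (Fin n) (Fin n) ℝ) + Z * Yᵀ).det := by
      rw [hS_def, det_one_add_mul_comm]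
    rw [h1, hZYN, det_mul, det_nonsing_inv]
    exact (isUnit_ringInverse.mpr hM).mul hN
  have hSinv : S⁻¹ * S = 1 := nonsing_inv_mul _ hSdet
  -- inverse formula
  have hkey : ((1 - Z * S⁻¹ * Yᵀ) * M⁻¹) * N = 1 := by
    have e1 : ((1 - Z * S⁻¹ * Yᵀ) * M⁻¹) * N = (1 - Z * S⁻¹ * Yᵀ) * (M⁻¹ * N) := by
      rw [Matrix.mul_assoc]
    rw [e1, ← hZYN]
    have e2 : (1 - Z * S⁻¹ * Yᵀ) * (1 + Z * Yᵀ)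
        = 1 + Z * Yᵀ - (Z * (S⁻¹ * S) * Yᵀ) := by
      rw [hS_def]
      simp only [Matrix.sub_mul, Matrix.mul_add, Matrix.add_mul, Matrix.one_mul,
        Matrix.mul_one, Matrix.mul_assoc]
      abel
    rw [e2, hSinv, Matrix.mul_one, add_sub_cancel_right]
  have hNinv : N⁻¹ = (1 - Z * S⁻¹ * Yᵀ) * M⁻¹ := inv_eq_left_inv hkey
  -- x = Bd *ᵥ b
  have hx' : x = Bd *ᵥ b := by
    rw [hx, hw', Matrix.mulVec_mulVec, ← Matrix.sub_mulVec, hBd', hNinv]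
    simp only [Matrix.sub_mul, Matrix.one_mul, Matrix.mul_assoc]
  -- orthogonality
  have horth : Ahᵀ *ᵥ (b - Ah *ᵥ x) = 0 := by
    rw [hx', hBd', Matrix.mulVec_sub, Matrix.mulVec_mulVec, Matrix.mulVec_mulVec]
    have e : Ahᵀ * Ah * (N⁻¹ * Ahᵀ) = Ahᵀ := by
      rw [← Matrix.mul_assoc, ← hN_def, mul_nonsing_inv _ hN, Matrix.one_mul]
    rw [e, sub_self]
  obtain ⟨h2, h3⟩ := ls_min Ah b x hN horth
  exact ⟨hx', h2, h3⟩
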